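/- Let Z be a Cauchy random variable with position parameter p and scale parameter σ > 0, and for a positive integer n let [Z]_n = max(min(Z, n), −n). Then E[[Z]_n] → p as n → ∞. -/

import Mathlib

open MeasureTheory Real Filter

noncomputable def cauchyMeasure (p σ : ℝ) : Measure ℝ :=
  volume.withDensity (fun x => ENNReal.ofReal ((1 / (π * σ)) * σ ^ 2 / (σ ^ 2 + (x - p) ^ 2)))

noncomputable def cK (p σ : ℝ) (x : ℝ) : ℝ :=
  (1 / (π * σ)) * σ ^ 2 / (σ ^ 2 + (x - p) ^ 2)

lemma cK_nonneg (p : ℝ) {σ : ℝ} (hσ : 0 < σ) (x : ℝ) : 0 ≤ cK p σ x := by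
  have hπ := Real.pi_pos
  unfold cK
  positivity

lemma cK_cont (p : ℝ) {σ : ℝ} (hσ : 0 < σ) : Continuous (cK p σ) := by
  apply Continuous.div (by continuity) (by continuity)
  intro x
  positivity

lemma cK_eq (p : ℝ) {σ : ℝ} (hσ : 0 < σ) (x : ℝ) :
    cK p σ x = (1 / (π * σ)) * (1 + (σ⁻¹ • (x - p)) ^ 2)⁻¹ := by
  have hπ := Real.pi_pos
  have h1 : σ ^ 2 + (x - p) ^ 2 ≠ 0 := by positivity
  have h2 : (1 + (σ⁻¹ • (x - p)) ^ 2) ≠ 0 := by positivity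
  unfold cK
  field_simp
  rw [smul_eq_mul]
  field_simp

lemma cK_integrable (p : ℝ) {σ : ℝ} (hσ : 0 < σ) : Integrable (cK p σ) := by
  have h1 : Integrable (fun x : ℝ => (1 + (σ⁻¹ • x) ^ 2)⁻¹) :=
    (integrable_comp_smul_iff volume (fun y : ℝ => (1 + y ^ 2)⁻¹)
      (inv_ne_zero hσ.ne')).mpr integrable_inv_one_add_sq
  have h2 : Integrable (fun x : ℝ => (1 + (σ⁻¹ • (x - p)) ^ 2)⁻¹) := h1.comp_sub_right p
  have h3 := h2.const_mul (1 / (π * σ))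
  exact h3.congr (Filter.Eventually.of_forall fun x => (cK_eq p hσ x).symm)

lemma cK_integral (p : ℝ) {σ : ℝ} (hσ : 0 < σ) : ∫ x, cK p σ x = 1 := by
  have hπ := Real.pi_pos
  have h0 : ∀ x : ℝ, cK p σ x = (1 / (π * σ)) * (1 + (σ⁻¹ • (x - p)) ^ 2)⁻¹ :=
    cK_eq p hσ
  calc ∫ x, cK p σ x
      = ∫ x, (1 / (π * σ)) * (1 + (σ⁻¹ • (x - p)) ^ 2)⁻¹ := by
        exact integral_congr_ae (Filter.Eventually.of_forall h0)
    _ = (1 / (π * σ)) * ∫ x, (1 + (σ⁻¹ • (x - p)) ^ 2)⁻¹ := integral_const_mul _ _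
    _ = (1 / (π * σ)) * ∫ x, (1 + (σ⁻¹ • x) ^ 2)⁻¹ := by
        rw [integral_sub_right_eq_self (fun x : ℝ => (1 + (σ⁻¹ • x) ^ 2)⁻¹) p]
    _ = (1 / (π * σ)) * (|σ| • ∫ y : ℝ, (1 + y ^ 2)⁻¹) := by
        rw [show (fun x : ℝ => (1 + (σ⁻¹ • x) ^ 2)⁻¹) = fun x : ℝ =>
          (fun y : ℝ => (1 + y ^ 2)⁻¹) (x / σ) from funext fun x => by
            simp [smul_eq_mul, div_eq_inv_mul]]
        rw [Measure.integral_comp_div (fun y : ℝ => (1 + y ^ 2)⁻¹) σ]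
    _ = 1 := by
        rw [integral_univ_inv_one_add_sq, abs_of_pos hσ, smul_eq_mul]
        field_simp

lemma cK_symm (p σ : ℝ) (x : ℝ) : cK p σ (2 * p - x) = cK p σ x := by
  unfold cK
  ring_nf

lemma integral_cauchy (p : ℝ) {σ : ℝ} (hσ : 0 < σ) (g : ℝ → ℝ) :
    ∫ x, g x ∂(cauchyMeasure p σ) = ∫ x, g x * cK p σ x := by
  have hmeas : Measurable fun x => (cK p σ x).toNNReal :=
    (cK_cont p hσ).measurable.real_toNNReal
  have : cauchyMeasure p σ = volume.withDensity
      (fun x => ((cK p σ x).toNNReal : ENNReal)) := rfl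
  rw [this, integral_withDensity_eq_integral_smul hmeas g]
  congr 1
  funext x
  rw [NNReal.smul_def, Real.coe_toNNReal _ (cK_nonneg p hσ x), smul_eq_mul, mul_comm]

lemma clamp_bound (p : ℝ) {n x : ℝ} (hn : |p| ≤ n) :
    |max (min x n) (-n) + max (min (2 * p - x) n) (-n) - 2 * p| ≤ 2 * |p| := by
  rw [abs_le]
  rcases abs_cases p with ⟨h1, h2⟩ | ⟨h1, h2⟩ <;>
    simp only [min_def, max_def] <;> split_ifs <;> constructor <;> linarith

lemma clamp_eq {n x : ℝ} (hn : |x| ≤ n) : max (min x n) (-n) = x := by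
  rw [abs_le] at hn
  rw [min_eq_left hn.2, max_eq_left hn.1]

theorem stmt12 (p σ : ℝ) (hσ : 0 < σ) :
    Tendsto (fun n : ℕ => ∫ x, max (min x (n : ℝ)) (-(n : ℝ)) ∂(cauchyMeasure p σ))
      atTop (nhds p) := by
  have hint := cK_integrable p hσ
  have hcont := cK_cont p hσ
  have hnn := cK_nonneg p hσ
  -- integrability of clamp * cK
  have hintc : ∀ n : ℕ, ∀ a : ℝ, Integrable
      (fun x => max (min (a - x) (n : ℝ)) (-(n : ℝ)) * cK p σ x) := by
    intro n a
    refine hint.bdd_mul (c := (n : ℝ)) ?_ (Filter.Eventually.of_forall fun x => ?_)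
    · exact (Continuous.max (by continuity) continuous_const).aestronglyMeasurable
    · rw [Real.norm_eq_abs, abs_le]
      constructor
      · exact le_max_right _ _
      · exact max_le (min_le_right _ _) (by simp [Nat.cast_nonneg])
  have hintc' : ∀ n : ℕ, Integrable
      (fun x => max (min x (n : ℝ)) (-(n : ℝ)) * cK p σ x) := by
    intro n
    refine hint.bdd_mul (c := (n : ℝ)) ?_ (Filter.Eventually.of_forall fun x => ?_)
    · exact (Continuous.max (by continuity) continuous_const).aestronglyMeasurable
    · rw [Real.norm_eq_abs, abs_le]
      constructor
      · exact le_max_right _ _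
      · exact max_le (min_le_right _ _) (by simp [Nat.cast_nonneg])
  -- symmetrization
  have key : ∀ n : ℕ, ∫ x, max (min x (n : ℝ)) (-(n : ℝ)) ∂(cauchyMeasure p σ)
      = (∫ x, (max (min x (n : ℝ)) (-(n : ℝ))
          + max (min (2 * p - x) (n : ℝ)) (-(n : ℝ))) * cK p σ x) / 2 := by
    intro n
    rw [integral_cauchy p hσ]
    have hsplit : (fun x => (max (min x (n : ℝ)) (-(n : ℝ))
        + max (min (2 * p - x) (n : ℝ)) (-(n : ℝ))) * cK p σ x)
        = fun x => max (min x (n : ℝ)) (-(n : ℝ)) * cK p σ x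
          + max (min (2 * p - x) (n : ℝ)) (-(n : ℝ)) * cK p σ x := by
      funext x; ring
    rw [hsplit, integral_add (hintc' n) (hintc n (2 * p))]
    have hsym : ∫ x, max (min (2 * p - x) (n : ℝ)) (-(n : ℝ)) * cK p σ x
        = ∫ x, max (min x (n : ℝ)) (-(n : ℝ)) * cK p σ x := by
      calc ∫ x, max (min (2 * p - x) (n : ℝ)) (-(n : ℝ)) * cK p σ x
          = ∫ x, max (min (2 * p - x) (n : ℝ)) (-(n : ℝ)) * cK p σ (2 * p - x) := by
            congr 1; funext x; rw [cK_symm]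
        _ = ∫ x, max (min x (n : ℝ)) (-(n : ℝ)) * cK p σ x :=
            integral_sub_left_eq_self
              (fun x => max (min x (n : ℝ)) (-(n : ℝ)) * cK p σ x) volume (2 * p)
    rw [hsym]
    ring
  simp only [key]
  -- dominated convergence
  have main : Tendsto (fun n : ℕ => ∫ x, (max (min x (n : ℝ)) (-(n : ℝ))
      + max (min (2 * p - x) (n : ℝ)) (-(n : ℝ))) * cK p σ x) atTop (nhds (2 * p)) := by
    have h2p : ∫ x, 2 * p * cK p σ x = 2 * p := by
      rw [integral_const_mul, cK_integral p hσ, mul_one]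
    have hd : Tendsto (fun n : ℕ => ∫ x, (max (min x (n : ℝ)) (-(n : ℝ))
        + max (min (2 * p - x) (n : ℝ)) (-(n : ℝ))) * cK p σ x) atTop
        (nhds (∫ x, 2 * p * cK p σ x)) := by
      apply tendsto_integral_filter_of_dominated_convergence
        (bound := fun x => (2 * |p| + 2 * |p|) * cK p σ x)
      · filter_upwards with n
        exact ((Continuous.add (Continuous.max (by continuity) continuous_const)
          (Continuous.max (by continuity) continuous_const)).mul hcont).aestronglyMeasurable
      · have hev : ∀ᶠ n : ℕ in atTop, |p| ≤ (n : ℝ) :=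
          tendsto_natCast_atTop_atTop.eventually_ge_atTop |p|
        filter_upwards [hev] with n hn
        filter_upwards with x
        rw [Real.norm_eq_abs, abs_mul, abs_of_nonneg (hnn x)]
        apply mul_le_mul_of_nonneg_right _ (hnn x)
        have hb := clamp_bound p (n := (n : ℝ)) (x := x) hn
        calc |max (min x (n : ℝ)) (-(n : ℝ)) + max (min (2 * p - x) (n : ℝ)) (-(n : ℝ))|
            ≤ |max (min x (n : ℝ)) (-(n : ℝ)) + max (min (2 * p - x) (n : ℝ)) (-(n : ℝ))
              - 2 * p| + |2 * p| := by
              have := abs_add_le (max (min x (n : ℝ)) (-(n : ℝ))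
                + max (min (2 * p - x) (n : ℝ)) (-(n : ℝ)) - 2 * p) (2 * p)
              simpa using this
          _ ≤ 2 * |p| + 2 * |p| := by
              have : |2 * p| = 2 * |p| := by rw [abs_mul]; simp
              linarith
      · exact (hint.const_mul _)
      · filter_upwards with x
        apply Tendsto.congr' _ tendsto_const_nhds
        have hev : ∀ᶠ n : ℕ in atTop, max |x| |2 * p - x| ≤ (n : ℝ) :=
          tendsto_natCast_atTop_atTop.eventually_ge_atTop _
        filter_upwards [hev] with n hn
        rw [clamp_eq ((le_max_left _ _).trans hn), clamp_eq ((le_max_right _ _).trans hn)]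
        ring
    rwa [h2p] at hd
  have := main.div_const 2
  rw [show 2 * p / 2 = p by ring] at this
  exact this
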